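/- arXiv:2011.11477 — 2 statements merged into one kernel-verified Lean document; each statement's English description precedes it below -/
import Mathlib

section
/- Let X ∈ ℝ^{n×p} and let C_xx ∈ ℝ^{p×p} be symmetric positive semidefinite with eigenvalues λ₁ ≥ … ≥ λ_p ≥ 0. Let (1/n)XᵀX have eigenvalues λ̃₁ ≥ λ̃₂ ≥ … with orthonormal eigenvectors ũᵢ, let k < min(n,p), Π_k = Σ_{i=1}^k ũᵢũᵢᵀ, Π_k^⊥ = I_p − Π_k, and E = C_xx − (1/n)XᵀX. Then ‖Π_k^⊥ C_xx Π_k^⊥‖_op ≤ ‖E‖_op + λ̃_{k+1} ≤ 2‖E‖_op + λ_{k+1}, where λ̃_{k+1} is the (k+1)-th largest eigenvalue of (1/n)XᵀX. -/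
/- STATEMENT 2: Let X ∈ ℝ^{n×p} and let C_xx be symmetric PSD with eigenvalues
λ₁ ≥ … ≥ λ_p ≥ 0. Let (1/n)XᵀX have eigenvalues λ̃₁ ≥ λ̃₂ ≥ … with orthonormal
eigenvectors ũᵢ, let k < min(n,p), Π_k = Σ_{i=1}^k ũᵢũᵢᵀ, Π_k^⊥ = I − Π_k, and
E = C_xx − (1/n)XᵀX. Then ‖Π_k^⊥ C_xx Π_k^⊥‖_op ≤ ‖E‖_op + λ̃_{k+1} ≤ 2‖E‖_op + λ_{k+1}. -/

open Matrix
open scoped BigOperators Matrix.Norms.L2Operator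

open RealInnerProductSpace in
section
section Aux

variable {p : ℕ}

lemma aux_sum_dot {m : Type*} [Fintype m] (f : m → Fin p → ℝ) (x : Fin p → ℝ) :
    (∑ i, f i) ⬝ᵥ x = ∑ i, f i ⬝ᵥ x := by
  simp only [dotProduct, Finset.sum_apply, Finset.sum_mul]
  exact Finset.sum_comm

lemma aux_dot_sum {m : Type*} [Fintype m] (x : Fin p → ℝ) (f : m → Fin p → ℝ) :
    x ⬝ᵥ (∑ i, f i) = ∑ i, x ⬝ᵥ f i := by
  simp only [dotProduct, Finset.sum_apply, Finset.mul_sum]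
  exact Finset.sum_comm

lemma aux_vmv_mul (a b c d : Fin p → ℝ) :
    vecMulVec a b * vecMulVec c d = (b ⬝ᵥ c) • vecMulVec a d := by
  ext i j
  simp only [mul_apply, vecMulVec_apply, Matrix.smul_apply, dotProduct, smul_eq_mul,
    Finset.sum_mul, Finset.mul_sum]
  congr 1; ext x; ring

lemma aux_sum_vmv_eq_one (w : Fin p → Fin p → ℝ)
    (hw : ∀ i j, w i ⬝ᵥ w j = if i = j then (1 : ℝ) else 0) :
    ∑ j, vecMulVec (w j) (w j) = (1 : Matrix (Fin p) (Fin p) ℝ) := by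
  classical
  set U : Matrix (Fin p) (Fin p) ℝ := Matrix.of w with hU
  have h1 : U * Uᵀ = 1 := by
    ext i j
    simpa [mul_apply, transpose_apply, one_apply, dotProduct, hU] using hw i j
  have h2 : Uᵀ * U = 1 := mul_eq_one_comm.mp h1
  calc ∑ j, vecMulVec (w j) (w j) = Uᵀ * U := by
        ext a b
        simp [Matrix.sum_apply, mul_apply, vecMulVec_apply, transpose_apply, hU, mul_comm]
    _ = 1 := h2

lemma aux_smul_sum_mul (w : Fin p → Fin p → ℝ)
    (hw : ∀ i j, w i ⬝ᵥ w j = if i = j then (1 : ℝ) else 0) (c d : Fin p → ℝ) :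
    (∑ i, c i • vecMulVec (w i) (w i)) * (∑ j, d j • vecMulVec (w j) (w j))
      = ∑ i, (c i * d i) • vecMulVec (w i) (w i) := by
  classical
  rw [Finset.sum_mul]
  refine Finset.sum_congr rfl fun i _ => ?_
  rw [Finset.mul_sum]
  have : ∀ j ∈ Finset.univ, (c i • vecMulVec (w i) (w i)) * (d j • vecMulVec (w j) (w j))
      = if j = i then (c i * d i) • vecMulVec (w i) (w i) else 0 := by
    intro j _
    rw [Matrix.smul_mul, Matrix.mul_smul, aux_vmv_mul, hw i j]
    by_cases h : i = j
    · subst h; simp [smul_smul]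
    · simp [h, Ne.symm h]
  rw [Finset.sum_congr rfl this, Finset.sum_ite_eq' Finset.univ i]
  simp

lemma aux_mulVec_sum (w : Fin p → Fin p → ℝ) (c : Fin p → ℝ) (y : Fin p → ℝ) :
    (∑ j, c j • vecMulVec (w j) (w j)) *ᵥ y = ∑ j, (c j * (w j ⬝ᵥ y)) • w j := by
  funext a
  simp only [mulVec, dotProduct, Matrix.sum_apply, Matrix.smul_apply, vecMulVec_apply,
    Finset.sum_apply, Pi.smul_apply, smul_eq_mul, Finset.sum_mul, Finset.mul_sum]
  rw [Finset.sum_comm]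
  congr 1; ext j; congr 1; ext b; ring

lemma aux_dot_sum_sum {m : ℕ} (w : Fin p → Fin p → ℝ)
    (hw : ∀ i j, (w i) ⬝ᵥ (w j) = if i = j then (1 : ℝ) else 0)
    (e : Fin m → Fin p) (he : Function.Injective e) (t s : Fin m → ℝ) :
    (∑ i, t i • w (e i)) ⬝ᵥ (∑ j, s j • w (e j)) = ∑ i, t i * s i := by
  classical
  rw [aux_sum_dot]
  refine Finset.sum_congr rfl fun i _ => ?_
  rw [smul_dotProduct, aux_dot_sum]
  have : ∀ j ∈ Finset.univ, (w (e i)) ⬝ᵥ (s j • w (e j))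
      = if j = i then s i else 0 := by
    intro j _
    rw [dotProduct_smul, hw (e i) (e j)]
    by_cases h : i = j
    · subst h; simp
    · rw [if_neg (fun hc => h (he hc)), if_neg (Ne.symm h)]; simp
  rw [Finset.sum_congr rfl this, Finset.sum_ite_eq' Finset.univ i]
  simp

lemma aux_dot_single {m : ℕ} (w : Fin p → Fin p → ℝ)
    (hw : ∀ i j, (w i) ⬝ᵥ (w j) = if i = j then (1 : ℝ) else 0)
    (e : Fin m → Fin p) (he : Function.Injective e) (t : Fin m → ℝ) (j : Fin p) :
    (w j) ⬝ᵥ (∑ i, t i • w (e i)) = ∑ i, if j = e i then t i else 0 := by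
  classical
  rw [aux_dot_sum]
  refine Finset.sum_congr rfl fun i _ => ?_
  rw [dotProduct_smul, hw j (e i)]
  by_cases h : j = e i <;> simp [h]

end Aux

section Aux2
variable {p : ℕ}

lemma aux_dot_sum_sum' (w : Fin p → Fin p → ℝ)
    (hw : ∀ i j, (w i) ⬝ᵥ (w j) = if i = j then (1 : ℝ) else 0) (t s : Fin p → ℝ) :
    (∑ i, t i • w i) ⬝ᵥ (∑ j, s j • w j) = ∑ i, t i * s i := by
  simpa using aux_dot_sum_sum w hw id Function.injective_id t s

lemma aux_expand (w : Fin p → Fin p → ℝ)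
    (hw : ∀ i j, (w i) ⬝ᵥ (w j) = if i = j then (1 : ℝ) else 0) (y : Fin p → ℝ) :
    y = ∑ j, (w j ⬝ᵥ y) • w j := by
  calc y = (1 : Matrix (Fin p) (Fin p) ℝ) *ᵥ y := (one_mulVec y).symm
    _ = (∑ j, (1:ℝ) • vecMulVec (w j) (w j)) *ᵥ y := by
        simp [one_smul, aux_sum_vmv_eq_one w hw]
    _ = ∑ j, ((1:ℝ) * (w j ⬝ᵥ y)) • w j := aux_mulVec_sum w _ y
    _ = ∑ j, (w j ⬝ᵥ y) • w j := by simp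

lemma aux_parseval (w : Fin p → Fin p → ℝ)
    (hw : ∀ i j, (w i) ⬝ᵥ (w j) = if i = j then (1 : ℝ) else 0) (y : Fin p → ℝ) :
    ∑ j, (w j ⬝ᵥ y)^2 = y ⬝ᵥ y := by
  conv_rhs => rw [aux_expand w hw y, aux_dot_sum_sum' w hw]
  simp [sq]

lemma aux_quadform (w : Fin p → Fin p → ℝ)
    (hw : ∀ i j, (w i) ⬝ᵥ (w j) = if i = j then (1 : ℝ) else 0) (c : Fin p → ℝ)
    (y : Fin p → ℝ) :
    y ⬝ᵥ ((∑ j, c j • vecMulVec (w j) (w j)) *ᵥ y) = ∑ j, c j * (w j ⬝ᵥ y)^2 := by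
  rw [aux_mulVec_sum, aux_dot_sum]
  refine Finset.sum_congr rfl fun j _ => ?_
  rw [dotProduct_smul]
  have : y ⬝ᵥ w j = w j ⬝ᵥ y := dotProduct_comm y (w j)
  rw [smul_eq_mul, this]; ring

lemma aux_euclid_normsq (z : EuclideanSpace ℝ (Fin p)) :
    ‖z‖^2 = (WithLp.equiv 2 (Fin p → ℝ) z) ⬝ᵥ (WithLp.equiv 2 (Fin p → ℝ) z) := by
  rw [EuclideanSpace.norm_eq, Real.sq_sqrt (Finset.sum_nonneg fun i _ => sq_nonneg _)]
  simp [dotProduct, Real.norm_eq_abs, sq_abs, sq]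

lemma aux_opNorm_le (A : Matrix (Fin p) (Fin p) ℝ) (m : ℝ) (hm : 0 ≤ m)
    (h : ∀ y : Fin p → ℝ, (A *ᵥ y) ⬝ᵥ (A *ᵥ y) ≤ m^2 * (y ⬝ᵥ y)) : ‖A‖ ≤ m := by
  rw [Matrix.l2_opNorm_def]
  refine ContinuousLinearMap.opNorm_le_bound _ hm fun x => ?_
  set y : Fin p → ℝ := WithLp.equiv 2 (Fin p → ℝ) x with hy
  have happ : ((Matrix.toEuclideanLin.trans LinearMap.toContinuousLinearMap) A) x
      = (WithLp.equiv 2 (Fin p → ℝ)).symm (A *ᵥ y) := rfl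
  rw [happ]
  have h1 : ‖(WithLp.equiv 2 (Fin p → ℝ)).symm (A *ᵥ y)‖^2 ≤ (m * ‖x‖)^2 := by
    rw [aux_euclid_normsq]
    simp only [Equiv.apply_symm_apply]
    calc (A *ᵥ y) ⬝ᵥ (A *ᵥ y) ≤ m^2 * (y ⬝ᵥ y) := h y
      _ = (m * ‖x‖)^2 := by
          have h2 : y ⬝ᵥ y = ‖x‖^2 := (aux_euclid_normsq x).symm
          rw [h2]; ring
  calc ‖(WithLp.equiv 2 (Fin p → ℝ)).symm (A *ᵥ y)‖
      = √(‖(WithLp.equiv 2 (Fin p → ℝ)).symm (A *ᵥ y)‖^2) := (Real.sqrt_sq (norm_nonneg _)).symm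
    _ ≤ √((m * ‖x‖)^2) := Real.sqrt_le_sqrt h1
    _ = m * ‖x‖ := Real.sqrt_sq (by positivity)

lemma aux_norm_sum_le (w : Fin p → Fin p → ℝ)
    (hw : ∀ i j, (w i) ⬝ᵥ (w j) = if i = j then (1 : ℝ) else 0) (c : Fin p → ℝ)
    (m : ℝ) (hm : 0 ≤ m) (hc : ∀ j, |c j| ≤ m) :
    ‖∑ j, c j • vecMulVec (w j) (w j)‖ ≤ m := by
  refine aux_opNorm_le _ m hm fun y => ?_
  rw [aux_mulVec_sum, aux_dot_sum_sum' w hw]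
  calc ∑ i, (c i * (w i ⬝ᵥ y)) * (c i * (w i ⬝ᵥ y))
      ≤ ∑ i, m^2 * (w i ⬝ᵥ y)^2 := by
        refine Finset.sum_le_sum fun i _ => ?_
        have h1 : (c i)^2 ≤ m^2 := by
          rw [← sq_abs]; exact pow_le_pow_left₀ (abs_nonneg _) (hc i) 2
        nlinarith [sq_nonneg (w i ⬝ᵥ y)]
    _ = m^2 * (y ⬝ᵥ y) := by rw [← Finset.mul_sum, aux_parseval w hw]
end Aux2

end

theorem pca_projected_cov_opNorm_bound
    (n p k : ℕ) (hn : 0 < n) (hk : k < min n p)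
    (X : Matrix (Fin n) (Fin p) ℝ)
    (Cxx : Matrix (Fin p) (Fin p) ℝ)
    -- eigendecomposition of the population covariance, eigenvalues sorted decreasingly
    (lam : Fin p → ℝ) (u : Fin p → Fin p → ℝ)
    (hlam_anti : ∀ i j : Fin p, i ≤ j → lam j ≤ lam i)
    (hlam_nonneg : ∀ j, 0 ≤ lam j)
    (hu_orth : ∀ i j, u i ⬝ᵥ u j = if i = j then (1 : ℝ) else 0)
    (hCxx : Cxx = ∑ j, lam j • vecMulVec (u j) (u j))
    -- eigendecomposition of the empirical covariance (1/n) XᵀX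
    (lamt : Fin p → ℝ) (ut : Fin p → Fin p → ℝ)
    (hlamt_anti : ∀ i j : Fin p, i ≤ j → lamt j ≤ lamt i)
    (hut_orth : ∀ i j, ut i ⬝ᵥ ut j = if i = j then (1 : ℝ) else 0)
    (hemp : (1 / (n : ℝ)) • (Xᵀ * X) = ∑ j, lamt j • vecMulVec (ut j) (ut j))
    -- the projections and the perturbation
    (Pik PikPerp E : Matrix (Fin p) (Fin p) ℝ)
    (hPik : Pik = ∑ i ∈ Finset.univ.filter (fun i : Fin p => (i : ℕ) < k),
        vecMulVec (ut i) (ut i))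
    (hPerp : PikPerp = 1 - Pik)
    (hE : E = Cxx - (1 / (n : ℝ)) • (Xᵀ * X)) :
    ‖PikPerp * Cxx * PikPerp‖ ≤ ‖E‖ + lamt ⟨k, Nat.lt_of_lt_of_le hk (Nat.min_le_right n p)⟩ ∧
      ‖E‖ + lamt ⟨k, Nat.lt_of_lt_of_le hk (Nat.min_le_right n p)⟩
        ≤ 2 * ‖E‖ + lam ⟨k, Nat.lt_of_lt_of_le hk (Nat.min_le_right n p)⟩ := by
  classical
  have hkp : k < p := Nat.lt_of_lt_of_le hk (Nat.min_le_right n p)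
  set K : Fin p := ⟨k, Nat.lt_of_lt_of_le hk (Nat.min_le_right n p)⟩ with hK
  set S : Matrix (Fin p) (Fin p) ℝ := (1 / (n : ℝ)) • (Xᵀ * X) with hSdef
  -- eigenvector equation and nonnegativity of lamt
  have hSut : ∀ j, S *ᵥ ut j = lamt j • ut j := by
    intro j
    rw [hemp, aux_mulVec_sum]
    have h : ∀ i ∈ Finset.univ, (lamt i * (ut i ⬝ᵥ ut j)) • ut i
        = if i = j then lamt j • ut j else 0 := by
      intro i _
      rw [hut_orth i j]
      by_cases h : i = j
      · subst h; simp
      · simp [h]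
    rw [Finset.sum_congr rfl h, Finset.sum_ite_eq' Finset.univ j]
    simp
  have hlamt_nn : ∀ j, 0 ≤ lamt j := by
    intro j
    have h1 : ut j ⬝ᵥ (S *ᵥ ut j) = lamt j := by
      rw [hSut j, dotProduct_smul, hut_orth j j]; simp
    have h2 : 0 ≤ ut j ⬝ᵥ (S *ᵥ ut j) := by
      rw [hSdef, Matrix.smul_mulVec, dotProduct_smul, ← Matrix.mulVec_mulVec,
        Matrix.dotProduct_mulVec, Matrix.vecMul_transpose]
      have h3 : 0 ≤ (X *ᵥ ut j) ⬝ᵥ (X *ᵥ ut j) :=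
        Finset.sum_nonneg fun i _ => mul_self_nonneg _
      have h4 : (0:ℝ) ≤ 1 / (n:ℝ) := by positivity
      rw [smul_eq_mul]
      exact mul_nonneg h4 h3
    linarith [h1 ▸ h2]
  -- Part 1
  set c1 : Fin p → ℝ := fun j => if (j : ℕ) < k then 0 else 1 with hc1
  have hPerp' : PikPerp = ∑ j, c1 j • vecMulVec (ut j) (ut j) := by
    rw [hPerp, hPik, ← aux_sum_vmv_eq_one ut hut_orth, Finset.sum_filter,
      ← Finset.sum_sub_distrib]
    refine Finset.sum_congr rfl fun j _ => ?_
    by_cases h : (j : ℕ) < k <;> simp [hc1, h]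
  have hPerpNorm : ‖PikPerp‖ ≤ 1 := by
    rw [hPerp']
    exact aux_norm_sum_le ut hut_orth c1 1 zero_le_one
      (fun j => by by_cases h : (j : ℕ) < k <;> simp [hc1, h])
  have hPSP : PikPerp * S * PikPerp
      = ∑ j, (c1 j * lamt j * c1 j) • vecMulVec (ut j) (ut j) := by
    rw [hPerp', hemp, aux_smul_sum_mul ut hut_orth, aux_smul_sum_mul ut hut_orth]
  have hPSPnorm : ‖PikPerp * S * PikPerp‖ ≤ lamt K := by
    rw [hPSP]
    refine aux_norm_sum_le ut hut_orth _ (lamt K) (hlamt_nn K) fun j => ?_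
    by_cases h : (j : ℕ) < k
    · simp [hc1, h, hlamt_nn K]
    · have hKj : K ≤ j := by
        rw [Fin.le_def]; simpa [hK] using Nat.le_of_not_lt h
      have h2 := hlamt_anti K j hKj
      have h3 : c1 j * lamt j * c1 j = lamt j := by simp [hc1, h]
      rw [h3, abs_of_nonneg (hlamt_nn j)]
      exact h2
  have hCsum : Cxx = E + S := by rw [hE, hSdef]; abel
  have key1 : PikPerp * Cxx * PikPerp = PikPerp * E * PikPerp + PikPerp * S * PikPerp := by
    rw [hCsum, Matrix.mul_add, Matrix.add_mul]
  have hEP : ‖PikPerp * E * PikPerp‖ ≤ ‖E‖ := by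
    have h1 : ‖PikPerp * E * PikPerp‖ ≤ ‖PikPerp * E‖ * ‖PikPerp‖ := Matrix.l2_opNorm_mul _ _
    have h2 : ‖PikPerp * E‖ ≤ ‖PikPerp‖ * ‖E‖ := Matrix.l2_opNorm_mul _ _
    nlinarith [norm_nonneg E, norm_nonneg PikPerp, norm_nonneg (PikPerp * E)]
  have first : ‖PikPerp * Cxx * PikPerp‖ ≤ ‖E‖ + lamt K := by
    calc ‖PikPerp * Cxx * PikPerp‖
        ≤ ‖PikPerp * E * PikPerp‖ + ‖PikPerp * S * PikPerp‖ := key1 ▸ norm_add_le _ _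
      _ ≤ ‖E‖ + lamt K := add_le_add hEP hPSPnorm
  -- Part 2 : Weyl-type bound lamt K ≤ lam K + ‖E‖
  have hk1p : k + 1 ≤ p := hkp
  set e1 : Fin (k+1) → Fin p := fun i => ⟨i, lt_of_lt_of_le i.isLt hk1p⟩ with he1def
  have he1 : Function.Injective e1 := by
    intro a b h
    have h2 : (a : ℕ) = (b : ℕ) := by
      have := congrArg Fin.val h
      simpa [he1def] using this
    exact Fin.ext h2
  set T : (Fin (k+1) → ℝ) →ₗ[ℝ] (Fin k → ℝ) :=
    { toFun := fun a => fun j => u ⟨j, lt_trans j.isLt hkp⟩ ⬝ᵥ (∑ i, a i • ut (e1 i)),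
      map_add' := by
        intro a b; funext j
        rw [show (∑ i, (a + b) i • ut (e1 i))
            = (∑ i, a i • ut (e1 i)) + (∑ i, b i • ut (e1 i)) by
          rw [← Finset.sum_add_distrib]
          exact Finset.sum_congr rfl fun i _ => by simp [add_smul]]
        simp [dotProduct_add]
      map_smul' := by
        intro r a; funext j
        dsimp only [RingHom.id_apply]
        rw [show (∑ i, (r • a) i • ut (e1 i)) = r • (∑ i, a i • ut (e1 i)) by
          rw [Finset.smul_sum]
          exact Finset.sum_congr rfl fun i _ => by simp [smul_smul]]
        simp [dotProduct_smul] } with hT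
  have hdim : Module.finrank ℝ (Fin k → ℝ) < Module.finrank ℝ (Fin (k+1) → ℝ) := by
    simp
  obtain ⟨a, ha, ha0⟩ := (Submodule.ne_bot_iff _).mp (LinearMap.ker_ne_bot_of_finrank_lt (f := T) hdim)
  have hTa : T a = 0 := ha
  set v : Fin p → ℝ := ∑ i, a i • ut (e1 i) with hv
  have hvv : v ⬝ᵥ v = ∑ i, a i * a i := aux_dot_sum_sum ut hut_orth e1 he1 a a
  have hvpos : 0 < v ⬝ᵥ v := by
    rw [hvv]
    obtain ⟨i, hi⟩ := Function.ne_iff.mp ha0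
    exact Finset.sum_pos' (fun i _ => mul_self_nonneg _)
      ⟨i, Finset.mem_univ i, mul_self_pos.mpr hi⟩
  have hczero : ∀ j : Fin p, k < (j : ℕ) → ut j ⬝ᵥ v = 0 := by
    intro j hj
    rw [hv, aux_dot_single ut hut_orth e1 he1]
    refine Finset.sum_eq_zero fun i _ => ?_
    rw [if_neg]
    intro h
    have := congrArg Fin.val h
    simp [he1def] at this
    omega
  have huzero : ∀ j : Fin p, (j : ℕ) < k → u j ⬝ᵥ v = 0 := by
    intro j hj
    have h := congrFun hTa ⟨(j : ℕ), hj⟩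
    simpa [hT, hv] using h
  have qS : v ⬝ᵥ (S *ᵥ v) = ∑ j, lamt j * (ut j ⬝ᵥ v)^2 := by
    rw [hemp, aux_quadform ut hut_orth]
  have qC : v ⬝ᵥ (Cxx *ᵥ v) = ∑ j, lam j * (u j ⬝ᵥ v)^2 := by
    rw [hCxx, aux_quadform u hu_orth]
  have hlow : lamt K * (v ⬝ᵥ v) ≤ v ⬝ᵥ (S *ᵥ v) := by
    rw [qS, ← aux_parseval ut hut_orth v, Finset.mul_sum]
    refine Finset.sum_le_sum fun j _ => ?_
    by_cases h : (j : ℕ) ≤ k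
    · have hjK : j ≤ K := by rw [Fin.le_def]; simpa [hK] using h
      exact mul_le_mul_of_nonneg_right (hlamt_anti j K hjK) (sq_nonneg _)
    · rw [hczero j (by omega)]; simp
  have hupp : v ⬝ᵥ (Cxx *ᵥ v) ≤ lam K * (v ⬝ᵥ v) := by
    rw [qC, ← aux_parseval u hu_orth v, Finset.mul_sum]
    refine Finset.sum_le_sum fun j _ => ?_
    by_cases h : (j : ℕ) < k
    · rw [huzero j h]; simp
    · have hKj : K ≤ j := by rw [Fin.le_def]; simpa [hK] using Nat.le_of_not_lt h
      exact mul_le_mul_of_nonneg_right (hlam_anti K j hKj) (sq_nonneg _)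
  have hEbound : |v ⬝ᵥ (E *ᵥ v)| ≤ ‖E‖ * (v ⬝ᵥ v) := by
    set v' : EuclideanSpace ℝ (Fin p) := (WithLp.equiv 2 (Fin p → ℝ)).symm v with hv'
    set z' : EuclideanSpace ℝ (Fin p) := (WithLp.equiv 2 (Fin p → ℝ)).symm (E *ᵥ v) with hz'
    have h1 : |(inner ℝ v' z' : ℝ)| ≤ ‖v'‖ * ‖z'‖ := abs_real_inner_le_norm v' z'
    have h2 : (inner ℝ v' z' : ℝ) = v ⬝ᵥ (E *ᵥ v) := by
      simp [hv', hz', PiLp.inner_apply, dotProduct, mul_comm]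
    have h3 : ‖z'‖ ≤ ‖E‖ * ‖v'‖ := by
      simpa [hv', hz'] using Matrix.l2_opNorm_mulVec E v'
    have h4 : ‖v'‖^2 = v ⬝ᵥ v := by
      rw [aux_euclid_normsq]; simp [hv']
    rw [← h2]
    calc |(inner ℝ v' z' : ℝ)| ≤ ‖v'‖ * ‖z'‖ := h1
      _ ≤ ‖v'‖ * (‖E‖ * ‖v'‖) := by
          exact mul_le_mul_of_nonneg_left h3 (norm_nonneg _)
      _ = ‖E‖ * (v ⬝ᵥ v) := by rw [← h4]; ring
  have hSC : v ⬝ᵥ (S *ᵥ v) = v ⬝ᵥ (Cxx *ᵥ v) - v ⬝ᵥ (E *ᵥ v) := by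
    have hs : S = Cxx - E := by rw [hE, hSdef]; abel
    rw [hs, Matrix.sub_mulVec, dotProduct_sub]
  have hW : lamt K ≤ lam K + ‖E‖ := by
    have habs := abs_le.mp hEbound
    have h5 : lamt K * (v ⬝ᵥ v) ≤ (lam K + ‖E‖) * (v ⬝ᵥ v) := by
      nlinarith
    exact le_of_mul_le_mul_right h5 hvpos
  exact ⟨first, by linarith⟩
end

section
/- Let X ∈ ℝ^{n×p} and let C_xx ∈ ℝ^{p×p} be symmetric positive semidefinite with eigenvalues λ₁ ≥ … ≥ λ_p ≥ 0. Let k < min(n,p), let X_{PCA,k} be the rank-k truncated SVD of X, and let E = C_xx − (1/n)XᵀX. If ‖E‖_op < λ_k, then tr(((1/n)X_{PCA,k}ᵀX_{PCA,k})^† C_xx) ≥ k λ_p / (λ₁ + ‖E‖_op); consequently the PCA-OLS variance V := (σ²/n)·tr(((1/n)X_{PCA,k}ᵀX_{PCA,k})^† C_xx) satisfies V ≥ (σ²/n)·kλ_p/(λ₁ + ‖E‖_op). -/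
/- STATEMENT 5: Let X ∈ ℝ^{n×p}, C_xx symmetric PSD with eigenvalues λ₁ ≥ … ≥ λ_p ≥ 0.
Let k < min(n,p), X_{PCA,k} be the rank-k truncated SVD of X, E = C_xx − (1/n)XᵀX.
If ‖E‖_op < λ_k then tr(((1/n)X_{PCA,k}ᵀX_{PCA,k})^† C_xx) ≥ kλ_p/(λ₁ + ‖E‖_op);
consequently V := (σ²/n)·tr(((1/n)X_{PCA,k}ᵀX_{PCA,k})^† C_xx) ≥ (σ²/n)·kλ_p/(λ₁ + ‖E‖_op). -/

open Matrix
open scoped BigOperators Matrix.Norms.L2Operator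

section Helpers

open scoped RealInnerProductSpace

variable {p : ℕ}

private lemma vmv_mulVec (a b v : Fin p → ℝ) : (vecMulVec a b) *ᵥ v = (b ⬝ᵥ v) • a := by
  ext i
  simp only [mulVec, dotProduct, vecMulVec_apply, Pi.smul_apply, smul_eq_mul]
  rw [Finset.sum_mul]
  exact Finset.sum_congr rfl fun j _ => by ring

private lemma vmv_mul_vmv (a b c d : Fin p → ℝ) :
    (vecMulVec a b : Matrix (Fin p) (Fin p) ℝ) * vecMulVec c d = (b ⬝ᵥ c) • vecMulVec a d := by
  ext i j
  simp only [mul_apply, vecMulVec_apply, Matrix.smul_apply, smul_eq_mul, dotProduct]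
  rw [Finset.sum_mul]
  exact Finset.sum_congr rfl fun l _ => by ring

private lemma vmv_transpose (a b : Fin p → ℝ) : (vecMulVec a b)ᵀ = vecMulVec b a := by
  ext i j; simp [vecMulVec_apply, mul_comm]

private lemma trace_vmv_mul (a b : Fin p → ℝ) (M : Matrix (Fin p) (Fin p) ℝ) :
    Matrix.trace (vecMulVec a b * M) = b ⬝ᵥ (M *ᵥ a) := by
  simp only [Matrix.trace, diag_apply, mul_apply, vecMulVec_apply, dotProduct, mulVec,
    Finset.mul_sum]
  rw [Finset.sum_comm]
  exact Finset.sum_congr rfl fun j _ => Finset.sum_congr rfl fun i _ => by ring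

private lemma sum_mulVec' {ι : Type*} (s : Finset ι) (f : ι → Matrix (Fin p) (Fin p) ℝ)
    (v : Fin p → ℝ) : (∑ j ∈ s, f j) *ᵥ v = ∑ j ∈ s, f j *ᵥ v := by
  ext i
  simp only [mulVec, dotProduct, Finset.sum_apply, Matrix.sum_apply, Finset.sum_mul]
  exact Finset.sum_comm

private lemma dotProduct_sum'' {ι : Type*} (s : Finset ι) (v : Fin p → ℝ) (f : ι → Fin p → ℝ) :
    v ⬝ᵥ (∑ j ∈ s, f j) = ∑ j ∈ s, v ⬝ᵥ f j := by
  simp only [dotProduct, Finset.sum_apply, Finset.mul_sum]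
  exact Finset.sum_comm

private lemma quadform_spectral {ι : Type*} (s : Finset ι) (c : ι → ℝ) (w : ι → Fin p → ℝ)
    (v : Fin p → ℝ) :
    v ⬝ᵥ ((∑ j ∈ s, c j • vecMulVec (w j) (w j)) *ᵥ v) = ∑ j ∈ s, c j * (w j ⬝ᵥ v) ^ 2 := by
  rw [sum_mulVec']
  rw [dotProduct_sum'']
  refine Finset.sum_congr rfl fun j _ => ?_
  rw [Matrix.smul_mulVec, vmv_mulVec, dotProduct_smul, dotProduct_smul]
  simp only [smul_eq_mul, dotProduct_comm (w j) v]
  ring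

private lemma parseval' (u : Fin p → Fin p → ℝ)
    (hu : ∀ i j, u i ⬝ᵥ u j = if i = j then (1 : ℝ) else 0) (v : Fin p → ℝ) :
    ∑ j, (u j ⬝ᵥ v) ^ 2 = v ⬝ᵥ v := by
  set U : Matrix (Fin p) (Fin p) ℝ := Matrix.of u with hU
  have h1 : U * Uᵀ = 1 := by
    ext i j
    simpa [mul_apply, Matrix.one_apply, dotProduct, U] using hu i j
  have h2 : Uᵀ * U = 1 := mul_eq_one_comm.mp h1
  have key : (U *ᵥ v) ⬝ᵥ (U *ᵥ v) = v ⬝ᵥ v := by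
    rw [Matrix.dotProduct_mulVec, Matrix.vecMul_mulVec, h2, Matrix.vecMul_one]
  calc ∑ j, (u j ⬝ᵥ v) ^ 2 = (U *ᵥ v) ⬝ᵥ (U *ᵥ v) := by
        simp [dotProduct, mulVec, sq, U]
    _ = v ⬝ᵥ v := key

private lemma abs_quadform_le (E : Matrix (Fin p) (Fin p) ℝ) (v : Fin p → ℝ) :
    |v ⬝ᵥ (E *ᵥ v)| ≤ ‖E‖ * (v ⬝ᵥ v) := by
  set w : EuclideanSpace ℝ (Fin p) := (EuclideanSpace.equiv (Fin p) ℝ).symm v with hw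
  set z : EuclideanSpace ℝ (Fin p) := (EuclideanSpace.equiv (Fin p) ℝ).symm (E *ᵥ v) with hz
  have hinner : ⟪w, z⟫ = v ⬝ᵥ (E *ᵥ v) := by
    simp [PiLp.inner_apply, RCLike.inner_apply, dotProduct, w, z]
    exact Finset.sum_congr rfl fun i _ => mul_comm _ _
  have hww : ⟪w, w⟫ = v ⬝ᵥ v := by
    simp [PiLp.inner_apply, RCLike.inner_apply, dotProduct, w]
    rw [EuclideanSpace.norm_eq, Real.sq_sqrt (by positivity)]
    simp [sq]
  have h1 : |⟪w, z⟫| ≤ ‖w‖ * ‖z‖ := abs_real_inner_le_norm w z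
  have h2 : ‖z‖ ≤ ‖E‖ * ‖w‖ := E.l2_opNorm_mulVec w
  have hwnn : (0:ℝ) ≤ ‖w‖ := norm_nonneg _
  have hEnn : (0:ℝ) ≤ ‖E‖ := norm_nonneg _
  calc |v ⬝ᵥ (E *ᵥ v)| = |⟪w, z⟫| := by rw [hinner]
    _ ≤ ‖w‖ * ‖z‖ := h1
    _ ≤ ‖w‖ * (‖E‖ * ‖w‖) := by nlinarith [norm_nonneg z]
    _ = ‖E‖ * (‖w‖ * ‖w‖) := by ring
    _ = ‖E‖ * (v ⬝ᵥ v) := by rw [← real_inner_self_eq_norm_mul_norm, hww]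

private noncomputable def dotL (a : Fin p → ℝ) : (Fin p → ℝ) →ₗ[ℝ] ℝ where
  toFun w := a ⬝ᵥ w
  map_add' x y := dotProduct_add _ _ _
  map_smul' c w := by simp

private lemma li_of_orth {ι : Type*} [Fintype ι] [DecidableEq ι] (w : ι → Fin p → ℝ)
    (h : ∀ i j, w i ⬝ᵥ w j = if i = j then (1 : ℝ) else 0) : LinearIndependent ℝ w := by
  rw [Fintype.linearIndependent_iff]
  intro g hg i
  have h2 := congrArg (fun v => w i ⬝ᵥ v) hg
  simp only [dotProduct_zero] at h2
  rw [show w i ⬝ᵥ (∑ j, g j • w j) = ∑ j, g j * (w i ⬝ᵥ w j) from ?_] at h2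
  · simp only [h] at h2
    simpa [Finset.sum_ite_eq'] using h2
  · simp only [dotProduct, Finset.sum_apply, Pi.smul_apply, smul_eq_mul, Finset.mul_sum,
      Finset.sum_mul]
    rw [Finset.sum_comm]
    exact Finset.sum_congr rfl fun j _ => Finset.sum_congr rfl fun l _ => by ring

private lemma exists_intersection (k : ℕ) (hk0 : 0 < k) (hkp : k < p)
    (u ut : Fin p → Fin p → ℝ)
    (hu : ∀ i j, u i ⬝ᵥ u j = if i = j then (1 : ℝ) else 0)
    (hut : ∀ i j, ut i ⬝ᵥ ut j = if i = j then (1 : ℝ) else 0) :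
    ∃ v : Fin p → ℝ, v ≠ 0 ∧ (∀ j : Fin p, k ≤ (j : ℕ) → u j ⬝ᵥ v = 0) ∧
      (∀ j : Fin p, (j : ℕ) < k - 1 → ut j ⬝ᵥ v = 0) := by
  set e1 : Fin k → (Fin p → ℝ) := fun i => u ⟨i, by omega⟩ with he1
  set e2 : Fin (p - (k - 1)) → (Fin p → ℝ) := fun i => ut ⟨k - 1 + i, by omega⟩ with he2
  have li1 : LinearIndependent ℝ e1 := by
    apply li_of_orth
    intro i j
    rw [he1]; dsimp only; rw [hu]
    have : ((⟨(i:ℕ), by omega⟩ : Fin p) = ⟨(j:ℕ), by omega⟩) ↔ i = j := by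
      simp only [Fin.mk.injEq, Fin.ext_iff]
    rw [if_congr this rfl rfl]
  have li2 : LinearIndependent ℝ e2 := by
    apply li_of_orth
    intro i j
    rw [he2]; dsimp only; rw [hut]
    have : ((⟨k - 1 + (i:ℕ), by omega⟩ : Fin p) = ⟨k - 1 + (j:ℕ), by omega⟩) ↔ i = j := by
      simp only [Fin.mk.injEq, Fin.ext_iff]; omega
    rw [if_congr this rfl rfl]
  set W1 := Submodule.span ℝ (Set.range e1) with hW1
  set W2 := Submodule.span ℝ (Set.range e2) with hW2
  have hd1 : Module.finrank ℝ W1 = k := by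
    rw [hW1, finrank_span_eq_card li1, Fintype.card_fin]
  have hd2 : Module.finrank ℝ W2 = p - (k - 1) := by
    rw [hW2, finrank_span_eq_card li2, Fintype.card_fin]
  have hsum := Submodule.finrank_sup_add_finrank_inf_eq W1 W2
  have hle : Module.finrank ℝ ↥(W1 ⊔ W2) ≤ p := by
    have := Submodule.finrank_le (W1 ⊔ W2)
    simpa using this
  have hpos : 0 < Module.finrank ℝ ↥(W1 ⊓ W2) := by omega
  have : Nontrivial ↥(W1 ⊓ W2) := Module.finrank_pos_iff.mp hpos
  obtain ⟨⟨v, hv⟩, hvne⟩ := exists_ne (0 : ↥(W1 ⊓ W2))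
  refine ⟨v, ?_, ?_, ?_⟩
  · intro h0
    exact hvne (by ext; simp [h0])
  · intro j hj
    have hker : W1 ≤ LinearMap.ker (dotL (u j)) := by
      rw [hW1, Submodule.span_le]
      rintro _ ⟨i, rfl⟩
      simp only [SetLike.mem_coe, LinearMap.mem_ker, dotL, LinearMap.coe_mk, AddHom.coe_mk, he1]
      rw [hu]
      have : j ≠ (⟨(i : ℕ), by omega⟩ : Fin p) := by
        intro h; rw [Fin.ext_iff] at h; simp only [] at h; omega
      simp [this]
    exact hker hv.1
  · intro j hj
    have hker : W2 ≤ LinearMap.ker (dotL (ut j)) := by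
      rw [hW2, Submodule.span_le]
      rintro _ ⟨i, rfl⟩
      simp only [SetLike.mem_coe, LinearMap.mem_ker, dotL, LinearMap.coe_mk, AddHom.coe_mk, he2]
      rw [hut]
      have : j ≠ (⟨k - 1 + (i : ℕ), by omega⟩ : Fin p) := by
        intro h; rw [Fin.ext_iff] at h; simp only [] at h; omega
      simp [this]
    exact hker hv.2

end Helpers

/-- `P` is the Moore–Penrose pseudoinverse of `A`. -/
def IsMoorePenrose {m n : Type*} [Fintype m] [Fintype n]
    (A : Matrix m n ℝ) (P : Matrix n m ℝ) : Prop :=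
  A * P * A = A ∧ P * A * P = P ∧ (A * P)ᵀ = A * P ∧ (P * A)ᵀ = P * A

private lemma mp_unique {m n : Type*} [Fintype m] [Fintype n]
    (A : Matrix m n ℝ) (P Q : Matrix n m ℝ)
    (hP : IsMoorePenrose A P) (hQ : IsMoorePenrose A Q) : P = Q := by
  obtain ⟨hP1, hP2, hP3, hP4⟩ := hP
  obtain ⟨hQ1, hQ2, hQ3, hQ4⟩ := hQ
  have e1 : Aᵀ = Aᵀ * Qᵀ * Aᵀ := by
    conv_lhs => rw [← hQ1]
    simp [Matrix.transpose_mul, Matrix.mul_assoc]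
  have hAP : A * P = A * Q := by
    calc A * P = (A * P)ᵀ := hP3.symm
      _ = Pᵀ * Aᵀ := Matrix.transpose_mul _ _
      _ = Pᵀ * (Aᵀ * Qᵀ * Aᵀ) := by rw [← e1]
      _ = (Pᵀ * Aᵀ) * (Qᵀ * Aᵀ) := by simp only [Matrix.mul_assoc]
      _ = (A * P)ᵀ * (A * Q)ᵀ := by rw [Matrix.transpose_mul, Matrix.transpose_mul]
      _ = (A * P) * (A * Q) := by rw [hP3, hQ3]
      _ = (A * P * A) * Q := by simp only [Matrix.mul_assoc]
      _ = A * Q := by rw [hP1]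
  have hPA : P * A = Q * A := by
    calc P * A = (P * A)ᵀ := hP4.symm
      _ = Aᵀ * Pᵀ := Matrix.transpose_mul _ _
      _ = (Aᵀ * Qᵀ * Aᵀ) * Pᵀ := by rw [← e1]
      _ = (Aᵀ * Qᵀ) * (Aᵀ * Pᵀ) := by simp only [Matrix.mul_assoc]
      _ = (Q * A)ᵀ * (P * A)ᵀ := by rw [Matrix.transpose_mul, Matrix.transpose_mul]
      _ = (Q * A) * (P * A) := by rw [hP4, hQ4]
      _ = Q * (A * P * A) := by simp only [Matrix.mul_assoc]
      _ = Q * A := by rw [hP1]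
  calc P = P * A * P := hP2.symm
    _ = (Q * A) * P := by rw [hPA]
    _ = Q * (A * P) := Matrix.mul_assoc _ _ _
    _ = Q * (A * Q) := by rw [hAP]
    _ = Q * A * Q := (Matrix.mul_assoc _ _ _).symm
    _ = Q := hQ2

theorem pca_ols_variance_lower_bound
    (n p k : ℕ) (hn : 0 < n) (hk0 : 0 < k) (hk : k < min n p)
    (X : Matrix (Fin n) (Fin p) ℝ)
    (Cxx : Matrix (Fin p) (Fin p) ℝ)
    (σ : ℝ) (hσ : 0 < σ)
    -- eigendecomposition of the population covariance, eigenvalues sorted decreasingly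
    (lam : Fin p → ℝ) (u : Fin p → Fin p → ℝ)
    (hlam_anti : ∀ i j : Fin p, i ≤ j → lam j ≤ lam i)
    (hlam_nonneg : ∀ j, 0 ≤ lam j)
    (hu_orth : ∀ i j, u i ⬝ᵥ u j = if i = j then (1 : ℝ) else 0)
    (hCxx : Cxx = ∑ j, lam j • vecMulVec (u j) (u j))
    -- eigendecomposition of the empirical covariance (1/n) XᵀX
    (lamt : Fin p → ℝ) (ut : Fin p → Fin p → ℝ)
    (hlamt_anti : ∀ i j : Fin p, i ≤ j → lamt j ≤ lamt i)
    (hut_orth : ∀ i j, ut i ⬝ᵥ ut j = if i = j then (1 : ℝ) else 0)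
    (hemp : (1 / (n : ℝ)) • (Xᵀ * X) = ∑ j, lamt j • vecMulVec (ut j) (ut j))
    -- the rank-k truncated SVD of X and the pseudoinverse of (1/n) X_{PCA,k}ᵀ X_{PCA,k}
    (Xk : Matrix (Fin n) (Fin p) ℝ)
    (hXk : (1 / (n : ℝ)) • (Xkᵀ * Xk)
      = ∑ i ∈ Finset.univ.filter (fun i : Fin p => (i : ℕ) < k), lamt i • vecMulVec (ut i) (ut i))
    (Bdag : Matrix (Fin p) (Fin p) ℝ)
    (hBdag : IsMoorePenrose ((1 / (n : ℝ)) • (Xkᵀ * Xk)) Bdag)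
    -- the perturbation and the spectral condition
    (E : Matrix (Fin p) (Fin p) ℝ)
    (hE : E = Cxx - (1 / (n : ℝ)) • (Xᵀ * X))
    (hEk : ‖E‖ < lam ⟨k - 1, by omega⟩) :
    (k : ℝ) * lam ⟨p - 1, by omega⟩ / (lam ⟨0, by omega⟩ + ‖E‖)
        ≤ Matrix.trace (Bdag * Cxx) ∧
      (σ ^ 2 / (n : ℝ)) * ((k : ℝ) * lam ⟨p - 1, by omega⟩ / (lam ⟨0, by omega⟩ + ‖E‖))
        ≤ (σ ^ 2 / (n : ℝ)) * Matrix.trace (Bdag * Cxx) := by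
  
  have hkp : k < p := lt_of_lt_of_le hk (min_le_right n p)
  set s : Finset (Fin p) := Finset.univ.filter (fun i : Fin p => (i : ℕ) < k) with hs
  -- quadratic forms
  have qC : ∀ v : Fin p → ℝ, v ⬝ᵥ (Cxx *ᵥ v) = ∑ j, lam j * (u j ⬝ᵥ v) ^ 2 := by
    intro v; rw [hCxx]; exact quadform_spectral _ _ _ _
  have qS : ∀ v : Fin p → ℝ, v ⬝ᵥ (((1 / (n : ℝ)) • (Xᵀ * X)) *ᵥ v)
      = ∑ j, lamt j * (ut j ⬝ᵥ v) ^ 2 := by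
    intro v; rw [hemp]; exact quadform_spectral _ _ _ _
  have qE : ∀ v : Fin p → ℝ,
      v ⬝ᵥ (E *ᵥ v) = v ⬝ᵥ (Cxx *ᵥ v) - v ⬝ᵥ (((1 / (n : ℝ)) • (Xᵀ * X)) *ᵥ v) := by
    intro v; rw [hE, Matrix.sub_mulVec, dotProduct_sub]
  have hEnn : (0:ℝ) ≤ ‖E‖ := norm_nonneg _
  -- Weyl-type lower bound: lamt at index k-1
  have weyl_low : lam ⟨k - 1, by omega⟩ - ‖E‖ ≤ lamt ⟨k - 1, by omega⟩ := by
    obtain ⟨v, hvne, hv1, hv2⟩ := exists_intersection k hk0 hkp u ut hu_orth hut_orth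
    have ha : 0 < v ⬝ᵥ v := by
      rcases lt_or_eq_of_le (Finset.sum_nonneg fun i _ => mul_self_nonneg (v i)) with h | h
      · exact h
      · exact absurd (dotProduct_self_eq_zero.mp h.symm) hvne
    have hparsu : ∑ j, (u j ⬝ᵥ v) ^ 2 = v ⬝ᵥ v := parseval' u hu_orth v
    have hparsut : ∑ j, (ut j ⬝ᵥ v) ^ 2 = v ⬝ᵥ v := parseval' ut hut_orth v
    have hqc : lam ⟨k - 1, by omega⟩ * (v ⬝ᵥ v) ≤ v ⬝ᵥ (Cxx *ᵥ v) := by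
      rw [qC, ← hparsu, Finset.mul_sum]
      refine Finset.sum_le_sum fun j _ => ?_
      by_cases hj : k ≤ (j : ℕ)
      · rw [hv1 j hj]; simp
      · have : lam ⟨k - 1, by omega⟩ ≤ lam j :=
          hlam_anti j ⟨k - 1, by omega⟩ (by simp [Fin.le_def]; omega)
        exact mul_le_mul_of_nonneg_right this (sq_nonneg _)
    have hqs : v ⬝ᵥ (((1 / (n : ℝ)) • (Xᵀ * X)) *ᵥ v) ≤ lamt ⟨k - 1, by omega⟩ * (v ⬝ᵥ v) := by
      rw [qS, ← hparsut, Finset.mul_sum]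
      refine Finset.sum_le_sum fun j _ => ?_
      by_cases hj : (j : ℕ) < k - 1
      · rw [hv2 j hj]; simp
      · have : lamt j ≤ lamt ⟨k - 1, by omega⟩ :=
          hlamt_anti ⟨k - 1, by omega⟩ j (by simp [Fin.le_def]; omega)
        exact mul_le_mul_of_nonneg_right this (sq_nonneg _)
    have habs := abs_quadform_le E v
    have hEq := qE v
    have : (lam ⟨k - 1, by omega⟩ - ‖E‖) * (v ⬝ᵥ v) ≤ lamt ⟨k - 1, by omega⟩ * (v ⬝ᵥ v) := by
      have h3 : v ⬝ᵥ (E *ᵥ v) ≤ ‖E‖ * (v ⬝ᵥ v) := le_trans (le_abs_self _) habs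
      nlinarith
    exact le_of_mul_le_mul_right (by linarith [this]) ha
  -- upper bound: lamt 0 ≤ lam 0 + ‖E‖
  have weyl_up : lamt ⟨0, by omega⟩ ≤ lam ⟨0, by omega⟩ + ‖E‖ := by
    set v : Fin p → ℝ := ut ⟨0, by omega⟩ with hv
    have hvv : v ⬝ᵥ v = 1 := by
      rw [hv, hut_orth]; simp
    have hqs : v ⬝ᵥ (((1 / (n : ℝ)) • (Xᵀ * X)) *ᵥ v) = lamt ⟨0, by omega⟩ := by
      rw [qS]
      rw [Finset.sum_eq_single (⟨0, by omega⟩ : Fin p)]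
      · rw [hv, hut_orth]; simp
      · intro j _ hne
        rw [hv, hut_orth]
        simp [hne]
      · simp
    have hqc : v ⬝ᵥ (Cxx *ᵥ v) ≤ lam ⟨0, by omega⟩ := by
      rw [qC]
      calc ∑ j, lam j * (u j ⬝ᵥ v) ^ 2 ≤ ∑ j, lam ⟨0, by omega⟩ * (u j ⬝ᵥ v) ^ 2 := by
            refine Finset.sum_le_sum fun j _ => ?_
            exact mul_le_mul_of_nonneg_right
              (hlam_anti ⟨0, by omega⟩ j (by simp [Fin.le_def])) (sq_nonneg _)
        _ = lam ⟨0, by omega⟩ := by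
            rw [← Finset.mul_sum, parseval' u hu_orth v, hvv, mul_one]
    have habs := abs_quadform_le E v
    have hEq := qE v
    rw [hvv, mul_one] at habs
    have h3 : -(‖E‖) ≤ v ⬝ᵥ (E *ᵥ v) := neg_le_of_abs_le habs
    linarith
  -- positivity facts
  have hlamk : (0:ℝ) < lam ⟨k - 1, by omega⟩ := lt_of_le_of_lt hEnn hEk
  have hlam0 : lam ⟨k - 1, by omega⟩ ≤ lam ⟨0, by omega⟩ :=
    hlam_anti ⟨0, by omega⟩ ⟨k - 1, by omega⟩ (by simp [Fin.le_def])
  have hden : (0:ℝ) < lam ⟨0, by omega⟩ + ‖E‖ := by linarith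
  have hlamt_pos : ∀ i ∈ s, 0 < lamt i := by
    intro i hi
    rw [hs, Finset.mem_filter] at hi
    have h1 : lamt ⟨k - 1, by omega⟩ ≤ lamt i :=
      hlamt_anti i ⟨k - 1, by omega⟩ (by simp [Fin.le_def]; omega)
    linarith
  have hlamt_up : ∀ i ∈ s, lamt i ≤ lam ⟨0, by omega⟩ + ‖E‖ := by
    intro i hi
    have h1 : lamt i ≤ lamt ⟨0, by omega⟩ :=
      hlamt_anti ⟨0, by omega⟩ i (by simp [Fin.le_def])
    linarith
  -- identify Bdag
  set P : Matrix (Fin p) (Fin p) ℝ := ∑ i ∈ s, (lamt i)⁻¹ • vecMulVec (ut i) (ut i) with hP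
  have prod_lemma : ∀ c d : Fin p → ℝ,
      (∑ i ∈ s, c i • vecMulVec (ut i) (ut i)) * (∑ j ∈ s, d j • vecMulVec (ut j) (ut j))
        = ∑ i ∈ s, (c i * d i) • vecMulVec (ut i) (ut i) := by
    intro c d
    rw [Finset.sum_mul]
    refine Finset.sum_congr rfl fun i hi => ?_
    rw [Finset.mul_sum]
    rw [Finset.sum_eq_single i]
    · rw [Matrix.smul_mul, Matrix.mul_smul, vmv_mul_vmv, hut_orth]
      simp [smul_smul, mul_comm]
    · intro j hj hne
      rw [Matrix.smul_mul, Matrix.mul_smul, vmv_mul_vmv, hut_orth]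
      simp [Ne.symm hne]
    · intro h; exact absurd hi h
  set B : Matrix (Fin p) (Fin p) ℝ := (1 / (n : ℝ)) • (Xkᵀ * Xk) with hB
  have hBs : B = ∑ i ∈ s, lamt i • vecMulVec (ut i) (ut i) := hXk
  have hBP : B * P = ∑ i ∈ s, vecMulVec (ut i) (ut i) := by
    rw [hBs, hP, prod_lemma]
    refine Finset.sum_congr rfl fun i hi => ?_
    rw [mul_inv_cancel₀ (ne_of_gt (hlamt_pos i hi)), one_smul]
  have hPB : P * B = ∑ i ∈ s, vecMulVec (ut i) (ut i) := by
    rw [hBs, hP, prod_lemma]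
    refine Finset.sum_congr rfl fun i hi => ?_
    rw [inv_mul_cancel₀ (ne_of_gt (hlamt_pos i hi)), one_smul]
  have proj_mul : ∀ c : Fin p → ℝ,
      (∑ i ∈ s, vecMulVec (ut i) (ut i)) * (∑ i ∈ s, c i • vecMulVec (ut i) (ut i))
        = ∑ i ∈ s, c i • vecMulVec (ut i) (ut i) := by
    intro c
    have := prod_lemma (fun _ => 1) c
    simpa using this
  have hmp : IsMoorePenrose B P := by
    refine ⟨?_, ?_, ?_, ?_⟩
    · rw [hBP, hBs, proj_mul]
    · rw [hPB, hP, proj_mul]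
    · rw [hBP, Matrix.transpose_sum]
      exact Finset.sum_congr rfl fun i _ => vmv_transpose _ _
    · rw [hPB, Matrix.transpose_sum]
      exact Finset.sum_congr rfl fun i _ => vmv_transpose _ _
  have hBdagP : Bdag = P := mp_unique B Bdag P hBdag hmp
  -- trace computation
  have htr : Matrix.trace (Bdag * Cxx) = ∑ i ∈ s, (lamt i)⁻¹ * (ut i ⬝ᵥ (Cxx *ᵥ ut i)) := by
    rw [hBdagP, hP, Finset.sum_mul, Matrix.trace_sum]
    refine Finset.sum_congr rfl fun i _ => ?_
    rw [Matrix.smul_mul, Matrix.trace_smul, trace_vmv_mul]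
    simp
  have hcard : s.card = k := by
    have : s = Finset.Iio (⟨k, hkp⟩ : Fin p) := by
      ext i
      simp [hs, Finset.mem_Iio, Fin.lt_def]
    rw [this, Fin.card_Iio]
  have main : (k : ℝ) * lam ⟨p - 1, by omega⟩ / (lam ⟨0, by omega⟩ + ‖E‖)
      ≤ Matrix.trace (Bdag * Cxx) := by
    rw [htr]
    have step : ∀ i ∈ s, (lam ⟨0, by omega⟩ + ‖E‖)⁻¹ * lam ⟨p - 1, by omega⟩
        ≤ (lamt i)⁻¹ * (ut i ⬝ᵥ (Cxx *ᵥ ut i)) := by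
      intro i hi
      have hq : lam ⟨p - 1, by omega⟩ ≤ ut i ⬝ᵥ (Cxx *ᵥ ut i) := by
        rw [qC]
        have hvv : ut i ⬝ᵥ ut i = 1 := by rw [hut_orth]; simp
        have hpe : ∑ j, (u j ⬝ᵥ ut i) ^ 2 = 1 := by
          rw [parseval' u hu_orth, hvv]
        calc lam ⟨p - 1, by omega⟩
            = lam ⟨p - 1, by omega⟩ * ∑ j, (u j ⬝ᵥ ut i) ^ 2 := by
              rw [hpe, mul_one]
          _ = ∑ j, lam ⟨p - 1, by omega⟩ * (u j ⬝ᵥ ut i) ^ 2 := Finset.mul_sum _ _ _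
          _ ≤ ∑ j, lam j * (u j ⬝ᵥ ut i) ^ 2 := by
              refine Finset.sum_le_sum fun j _ => ?_
              exact mul_le_mul_of_nonneg_right
                (hlam_anti j ⟨p - 1, by omega⟩ (by simp [Fin.le_def]; omega)) (sq_nonneg _)
      have hinv : (lam ⟨0, by omega⟩ + ‖E‖)⁻¹ ≤ (lamt i)⁻¹ :=
        inv_anti₀ (hlamt_pos i hi) (hlamt_up i hi)
      have h1 : (0:ℝ) ≤ (lamt i)⁻¹ := le_of_lt (inv_pos.mpr (hlamt_pos i hi))
      calc (lam ⟨0, by omega⟩ + ‖E‖)⁻¹ * lam ⟨p - 1, by omega⟩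
          ≤ (lamt i)⁻¹ * lam ⟨p - 1, by omega⟩ :=
            mul_le_mul_of_nonneg_right hinv (hlam_nonneg _)
        _ ≤ (lamt i)⁻¹ * (ut i ⬝ᵥ (Cxx *ᵥ ut i)) := mul_le_mul_of_nonneg_left hq h1
    calc (k : ℝ) * lam ⟨p - 1, by omega⟩ / (lam ⟨0, by omega⟩ + ‖E‖)
        = ∑ _i ∈ s, (lam ⟨0, by omega⟩ + ‖E‖)⁻¹ * lam ⟨p - 1, by omega⟩ := by
          have hc : ((s.card : ℕ) : ℝ) = (k : ℝ) := by exact_mod_cast congrArg Nat.cast hcard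
          rw [Finset.sum_const, nsmul_eq_mul, hc]
          field_simp
      _ ≤ ∑ i ∈ s, (lamt i)⁻¹ * (ut i ⬝ᵥ (Cxx *ᵥ ut i)) := Finset.sum_le_sum step
  refine ⟨main, ?_⟩
  apply mul_le_mul_of_nonneg_left main
  positivity
end
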